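/- Let $X$ be a reflexive Banach space and $D$ a group of linear isometries of $X$ such that whenever $g_k \in D$ does not converge weakly (in operator sense, elementwise) to $0$ on a subsequence and $u_k \rightharpoonup 0$, then $g_k u_k \rightharpoonup 0$ on a subsequence. If $g_k, h_k \in D$ satisfy $h_k^{-1} g_k \rightharpoonup 0$ (elementwise weakly), then also $g_k^{-1} h_k \rightharpoonup 0$ (elementwise weakly) on every subsequence along which it converges; more precisely, it is impossible that $g_k^{-1} h_k \not\rightharpoonup 0$. -/

import Mathlib

open Filter Topology

/-- Weak convergence of a sequence to `0` in a normed space. -/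
def WeakNull {X : Type*} [NormedAddCommGroup X] [NormedSpace ℝ X]
    (u : ℕ → X) : Prop :=
  ∀ φ : X →L[ℝ] ℝ, Tendsto (fun k => φ (u k)) atTop (𝓝 0)

/-- Elementwise weak convergence to `0` of a sequence of operators. -/
def OpWeakNull {X : Type*} [NormedAddCommGroup X] [NormedSpace ℝ X]
    (g : ℕ → X ≃ₗᵢ[ℝ] X) : Prop :=
  ∀ x : X, WeakNull (fun k => g k x)

/-- in a reflexive Banach space with a group `D` of linear
isometries satisfying the dislocation transfer property, if
`h_k⁻¹ g_k ⇀ 0` elementwise then it is impossible that `g_k⁻¹ h_k ̸⇀ 0`. -/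
theorem inverse_dislocations_weakly_null {X : Type*} [NormedAddCommGroup X]
    [NormedSpace ℝ X] [CompleteSpace X] [Nontrivial X]
    (D : Subgroup (X ≃ₗᵢ[ℝ] X))
    -- reflexivity, in the form used: bounded sequences have weakly convergent
    -- subsequences
    (hrefl : ∀ u : ℕ → X, (∃ C : ℝ, ∀ k, ‖u k‖ ≤ C) →
      ∃ (ψ : ℕ → ℕ) (w : X), StrictMono ψ ∧
        ∀ φ : X →L[ℝ] ℝ, Tendsto (fun k => φ (u (ψ k))) atTop (𝓝 (φ w)))
    -- the transfer property (newii): if `g_k ∈ D`, `g_k ̸⇀ 0`, and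
    -- `u_k ⇀ 0`, then `g_k u_k ⇀ 0` on a subsequence
    (hnewii : ∀ g : ℕ → X ≃ₗᵢ[ℝ] X, (∀ k, g k ∈ D) →
      ¬ OpWeakNull g → ∀ u : ℕ → X, WeakNull u →
        ∃ ψ : ℕ → ℕ, StrictMono ψ ∧ WeakNull (fun k => g (ψ k) (u (ψ k))))
    (g h : ℕ → X ≃ₗᵢ[ℝ] X) (hg : ∀ k, g k ∈ D) (hh : ∀ k, h k ∈ D)
    (hgh : OpWeakNull (fun k => (h k)⁻¹ * g k)) :
    ¬ ¬ OpWeakNull (fun k => (g k)⁻¹ * h k) := by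
  intro hne
  obtain ⟨x, hx⟩ := exists_ne (0 : X)
  have hu : WeakNull (fun k => ((h k)⁻¹ * g k) x) := hgh x
  obtain ⟨ψ, -, hnull⟩ := hnewii (fun k => (g k)⁻¹ * h k)
    (fun k => D.mul_mem (D.inv_mem (hg k)) (hh k)) hne _ hu
  have hxz : ∀ φ : X →L[ℝ] ℝ, φ x = 0 := by
    intro φ
    have := hnull φ
    have heq : (fun k => φ (((g (ψ k))⁻¹ * h (ψ k)) (((h (ψ k))⁻¹ * g (ψ k)) x)))
        = fun _ => φ x := by
      funext k
      simp
    rw [heq] at this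
    exact tendsto_nhds_unique tendsto_const_nhds this
  obtain ⟨φ, hφ⟩ := exists_dual_vector ℝ x (norm_ne_zero_iff.mpr hx)
  have := hxz φ
  rw [hφ.2] at this
  simp [norm_eq_zero, hx] at this
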